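/- arXiv:1307.5402 — 8 statements merged into one kernel-verified Lean document; each statement's English description precedes it below -/
import Mathlib

section
/- If f : (0, b*] → ℝ is (α,m)-convex and nondecreasing, then f is harmonically (α,m)-convex. -/
theorem am_convex_nondecreasing_implies_harmonically_am_convex
    (bs α m : ℝ) (hbs : 0 < bs) (hα : α ∈ Set.Icc (0:ℝ) 1) (hm : m ∈ Set.Ioc (0:ℝ) 1)
    (f : ℝ → ℝ)
    (hconv : ∀ x ∈ Set.Ioc 0 bs, ∀ y ∈ Set.Ioc 0 bs, ∀ t ∈ Set.Icc (0:ℝ) 1,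
      t * x + m * (1 - t) * y ∈ Set.Ioc 0 bs →
      f (t * x + m * (1 - t) * y) ≤ t ^ α * f x + m * (1 - t ^ α) * f y)
    (hmono : MonotoneOn f (Set.Ioc 0 bs)) :
    ∀ x ∈ Set.Ioc 0 bs, ∀ y ∈ Set.Ioc 0 bs, ∀ t ∈ Set.Icc (0:ℝ) 1,
      f (m * x * y / (m * t * y + (1 - t) * x)) ≤ t ^ α * f x + m * (1 - t ^ α) * f y := by
  intro x hx y hy t ht
  obtain ⟨hx0, hxb⟩ := hx
  obtain ⟨hy0, hyb⟩ := hy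
  obtain ⟨ht0, ht1⟩ := ht
  obtain ⟨hm0, hm1⟩ := hm
  have hD : 0 < m * t * y + (1 - t) * x := by
    rcases eq_or_lt_of_le ht0 with h | h
    · subst h; simpa using hx0
    · nlinarith [mul_pos (mul_pos hm0 h) hy0, mul_nonneg (sub_nonneg.2 ht1) hx0.le]
  have hA0 : 0 < t * x + m * (1 - t) * y := by
    rcases eq_or_lt_of_le ht0 with h | h
    · nlinarith [mul_pos hm0 hy0]
    · nlinarith [mul_pos h hx0, mul_nonneg (mul_nonneg hm0.le (sub_nonneg.2 ht1)) hy0.le]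
  have hAb : t * x + m * (1 - t) * y ≤ bs := by
    nlinarith [mul_nonneg (sub_nonneg.2 ht1) (sub_nonneg.2 hyb),
      mul_nonneg ht0 (sub_nonneg.2 hxb),
      mul_nonneg (mul_nonneg (sub_nonneg.2 hm1) (sub_nonneg.2 ht1)) hy0.le]
  have hHA : m * x * y / (m * t * y + (1 - t) * x) ≤ t * x + m * (1 - t) * y := by
    rw [div_le_iff₀ hD]
    nlinarith [mul_nonneg (mul_nonneg ht0 (sub_nonneg.2 ht1)) (sq_nonneg (x - m * y))]
  have hH0 : 0 < m * x * y / (m * t * y + (1 - t) * x) :=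
    div_pos (mul_pos (mul_pos hm0 hx0) hy0) hD
  have hAmem : t * x + m * (1 - t) * y ∈ Set.Ioc 0 bs := ⟨hA0, hAb⟩
  have hHmem : m * x * y / (m * t * y + (1 - t) * x) ∈ Set.Ioc 0 bs :=
    ⟨hH0, hHA.trans hAb⟩
  calc f (m * x * y / (m * t * y + (1 - t) * x)) ≤ f (t * x + m * (1 - t) * y) :=
        hmono hHmem hAmem hHA
    _ ≤ t ^ α * f x + m * (1 - t ^ α) * f y :=
        hconv x ⟨hx0, hxb⟩ y ⟨hy0, hyb⟩ t ⟨ht0, ht1⟩ hAmem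
end

section
/- If f : (0, b*] → ℝ is harmonically (α,m)-convex and nonincreasing, then f is (α,m)-convex. -/
theorem harmonically_am_convex_nonincreasing_implies_am_convex
    (bs α m : ℝ) (hbs : 0 < bs) (hα : α ∈ Set.Icc (0:ℝ) 1) (hm : m ∈ Set.Ioc (0:ℝ) 1)
    (f : ℝ → ℝ)
    (hconv : ∀ x ∈ Set.Ioc 0 bs, ∀ y ∈ Set.Ioc 0 bs, ∀ t ∈ Set.Icc (0:ℝ) 1,
      f (m * x * y / (m * t * y + (1 - t) * x)) ≤ t ^ α * f x + m * (1 - t ^ α) * f y)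
    (hanti : AntitoneOn f (Set.Ioc 0 bs)) :
    ∀ x ∈ Set.Ioc 0 bs, ∀ y ∈ Set.Ioc 0 bs, ∀ t ∈ Set.Icc (0:ℝ) 1,
      f (t * x + m * (1 - t) * y) ≤ t ^ α * f x + m * (1 - t ^ α) * f y := by
  intro x hx y hy t ht
  obtain ⟨hx0, hxb⟩ := hx
  obtain ⟨hy0, hyb⟩ := hy
  obtain ⟨ht0, ht1⟩ := ht
  obtain ⟨hm0, hm1⟩ := hm
  have hD : 0 < m * t * y + (1 - t) * x := by
    rcases lt_or_eq_of_le ht1 with h | h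
    · nlinarith [mul_pos (by linarith : (0:ℝ) < 1 - t) hx0,
        mul_nonneg (mul_nonneg hm0.le ht0) hy0.le]
    · subst h; nlinarith [mul_pos hm0 hy0]
  have hA0 : 0 < t * x + m * (1 - t) * y := by
    rcases lt_or_eq_of_le ht0 with h | h
    · nlinarith [mul_pos h hx0, mul_nonneg (mul_nonneg hm0.le (by linarith : (0:ℝ) ≤ 1 - t)) hy0.le]
    · rw [← h]; nlinarith [mul_pos hm0 hy0]
  have hAb : t * x + m * (1 - t) * y ≤ bs := by
    nlinarith [mul_nonneg ht0 (sub_nonneg.2 hxb),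
      mul_nonneg (by linarith : (0:ℝ) ≤ 1 - t) (sub_nonneg.2 hyb),
      mul_nonneg (mul_nonneg (by linarith : (0:ℝ) ≤ 1 - m) (by linarith : (0:ℝ) ≤ 1 - t)) hy0.le]
  have hH0 : 0 < m * x * y / (m * t * y + (1 - t) * x) :=
    div_pos (by positivity) hD
  have hHA : m * x * y / (m * t * y + (1 - t) * x) ≤ t * x + m * (1 - t) * y := by
    rw [div_le_iff₀ hD]
    nlinarith [mul_nonneg (mul_nonneg ht0 (by linarith : (0:ℝ) ≤ 1 - t)) (sq_nonneg (x - m * y))]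
  have hHb : m * x * y / (m * t * y + (1 - t) * x) ≤ bs := le_trans hHA hAb
  calc f (t * x + m * (1 - t) * y)
      ≤ f (m * x * y / (m * t * y + (1 - t) * x)) :=
        hanti ⟨hH0, hHb⟩ ⟨hA0, hAb⟩ hHA
    _ ≤ t ^ α * f x + m * (1 - t ^ α) * f y :=
        hconv x ⟨hx0, hxb⟩ y ⟨hy0, hyb⟩ t ⟨ht0, ht1⟩
end

section
/- Let f : (0,∞) → ℝ be harmonically (α,m)-convex with α ∈ [0,1], m ∈ (0,1], 0 < a < b, and f integrable on [a,b]. Then (ab/(b-a)) ∫_a^b f(x)/x² dx ≤ (f(a) + α m f(b/m))/(α + 1). -/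
open intervalIntegral MeasureTheory

theorem hermite_hadamard_right_harmonically_am_convex
    (f : ℝ → ℝ) (α m a b : ℝ) (hα : α ∈ Set.Icc (0:ℝ) 1) (hm : m ∈ Set.Ioc (0:ℝ) 1)
    (ha : 0 < a) (hab : a < b)
    (hconv : ∀ x : ℝ, 0 < x → ∀ y : ℝ, 0 < y → ∀ t ∈ Set.Icc (0:ℝ) 1,
      f (m * x * y / (m * t * y + (1 - t) * x)) ≤ t ^ α * f x + m * (1 - t ^ α) * f y)
    (hint : IntervalIntegrable f volume a b) :
    (a * b / (b - a)) * ∫ x in a..b, f x / x ^ 2 ≤ (f a + α * m * f (b / m)) / (α + 1) := by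
  obtain ⟨hα0, hα1⟩ := hα
  obtain ⟨hm0, hm1⟩ := hm
  have hb : 0 < b := ha.trans hab
  have hba : 0 < b - a := sub_pos.mpr hab
  have hα1' : (0:ℝ) < α + 1 := by linarith
  set K : ℝ := a * b / (b - a) with hK
  have hKpos : 0 < K := div_pos (mul_pos ha hb) hba
  set t : ℝ → ℝ := fun x => a * (b - x) / (x * (b - a)) with ht
  have huIcc : Set.uIcc a b = Set.Icc a b := Set.uIcc_of_le hab.le
  have hx_ne : ∀ x ∈ Set.Icc a b, x ≠ 0 := fun x hx => (lt_of_lt_of_le ha hx.1).ne'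
  have hx_pos : ∀ x ∈ Set.Icc a b, 0 < x := fun x hx => lt_of_lt_of_le ha hx.1
  -- t x ∈ [0,1]
  have ht_mem : ∀ x ∈ Set.Icc a b, t x ∈ Set.Icc (0:ℝ) 1 := by
    intro x hx
    have hxp := hx_pos x hx
    constructor
    · apply div_nonneg
      · nlinarith [hx.2]
      · positivity
    · rw [div_le_one (by positivity)]
      nlinarith [hx.1]
  -- pointwise inequality
  have hpt : ∀ x ∈ Set.Icc a b,
      f x * (K / x ^ 2) ≤ (t x ^ α * f a + m * (1 - t x ^ α) * f (b / m)) * (K / x ^ 2) := by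
    intro x hx
    have hxp := hx_pos x hx
    have hxne := hx_ne x hx
    have hfle : f x ≤ t x ^ α * f a + m * (1 - t x ^ α) * f (b / m) := by
      have h := hconv a ha (b / m) (div_pos hb hm0) (t x) (ht_mem x hx)
      have harg : m * a * (b / m) / (m * t x * (b / m) + (1 - t x) * a) = x := by
        have hden : m * t x * (b / m) + (1 - t x) * a = a * b / x := by
          simp only [ht]
          field_simp
          ring
        have hnum : m * a * (b / m) = a * b := by
          field_simp
        rw [hden, hnum, div_div_eq_mul_div, mul_comm (a*b) x, mul_div_assoc,
          div_self (mul_pos ha hb).ne', mul_one]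
      rwa [harg] at h
    exact mul_le_mul_of_nonneg_right hfle (by positivity)
  -- derivative of t
  have hder_t : ∀ x : ℝ, x ≠ 0 → HasDerivAt t (-(K / x ^ 2)) x := by
    intro x hx
    have h1 : HasDerivAt (fun x : ℝ => a * (b - x)) (-a) x := by
      simpa using (((hasDerivAt_id x).const_sub b).const_mul a)
    have h2 : HasDerivAt (fun x : ℝ => x * (b - a)) (b - a) x := by
      simpa using (hasDerivAt_id x).mul_const (b - a)
    have h3 := h1.div h2 (mul_ne_zero hx hba.ne')
    refine h3.congr_deriv ?_
    rw [hK]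
    field_simp
    ring
  -- continuity facts
  have ht_cont : ContinuousOn t (Set.Icc a b) := by
    apply ContinuousOn.div
    · fun_prop
    · fun_prop
    · intro x hx; exact mul_ne_zero (hx_ne x hx) hba.ne'
  have hKx_cont : ContinuousOn (fun x : ℝ => K / x ^ 2) (Set.Icc a b) := by
    apply ContinuousOn.div continuousOn_const (by fun_prop)
    intro x hx; exact pow_ne_zero 2 (hx_ne x hx)
  have htα_cont : ContinuousOn (fun x => t x ^ α) (Set.Icc a b) :=
    ht_cont.rpow_const (fun x hx => Or.inr hα0)
  have hint1 : IntervalIntegrable (fun x => t x ^ α * (K / x ^ 2)) volume a b := by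
    apply ContinuousOn.intervalIntegrable
    rw [huIcc]; exact htα_cont.mul hKx_cont
  have hint0 : IntervalIntegrable (fun x : ℝ => K / x ^ 2) volume a b := by
    apply ContinuousOn.intervalIntegrable
    rw [huIcc]; exact hKx_cont
  -- value of ∫ t^α * K/x²
  have hI1 : (∫ x in a..b, t x ^ α * (K / x ^ 2)) = 1 / (α + 1) := by
    have hFd : ∀ x ∈ Set.uIcc a b,
        HasDerivAt (fun x => -(1 / (α + 1)) * t x ^ (α + 1)) (t x ^ α * (K / x ^ 2)) x := by
      intro x hx
      rw [huIcc] at hx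
      have hxne := hx_ne x hx
      have hrp : HasDerivAt (fun u : ℝ => u ^ (α + 1)) ((α + 1) * t x ^ (α + 1 - 1)) (t x) :=
        Real.hasDerivAt_rpow_const (Or.inr (by linarith))
      have hcomp := (hrp.comp x (hder_t x hxne)).const_mul (-(1 / (α + 1)))
      refine hcomp.congr_deriv ?_
      rw [add_sub_cancel_right]
      field_simp
    rw [intervalIntegral.integral_eq_sub_of_hasDerivAt hFd hint1]
    have htb : t b = 0 := by simp [ht]
    have hta : t a = 1 := by
      rw [ht]; exact div_self (mul_ne_zero ha.ne' hba.ne')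
    rw [htb, hta, Real.zero_rpow hα1'.ne', Real.one_rpow]
    ring
  -- value of ∫ K/x²
  have hI0 : (∫ x in a..b, K / x ^ 2) = 1 := by
    have hGd : ∀ x ∈ Set.uIcc a b,
        HasDerivAt (fun x : ℝ => -(K * x⁻¹)) (K / x ^ 2) x := by
      intro x hx
      rw [huIcc] at hx
      have hxne := hx_ne x hx
      have := ((hasDerivAt_inv hxne).const_mul K).neg
      refine this.congr_deriv ?_
      field_simp
    rw [intervalIntegral.integral_eq_sub_of_hasDerivAt hGd hint0]
    rw [hK]
    field_simp
    ring
  -- integrability of lhs and rhs integrands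
  have hintf : IntervalIntegrable (fun x => f x * (K / x ^ 2)) volume a b := by
    apply hint.mul_continuousOn
    rw [huIcc]; exact hKx_cont
  have hintg : IntervalIntegrable
      (fun x => (t x ^ α * f a + m * (1 - t x ^ α) * f (b / m)) * (K / x ^ 2)) volume a b := by
    apply ContinuousOn.intervalIntegrable
    rw [huIcc]
    exact ((htα_cont.mul continuousOn_const).add
      ((continuousOn_const.mul (continuousOn_const.sub htα_cont)).mul
        continuousOn_const)).mul hKx_cont
  -- main inequality between integrals
  have key : (∫ x in a..b, f x * (K / x ^ 2))
      ≤ ∫ x in a..b, (t x ^ α * f a + m * (1 - t x ^ α) * f (b / m)) * (K / x ^ 2) :=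
    intervalIntegral.integral_mono_on hab.le hintf hintg hpt
  -- compute rhs integral
  have hsplit : (∫ x in a..b, (t x ^ α * f a + m * (1 - t x ^ α) * f (b / m)) * (K / x ^ 2))
      = (f a - m * f (b / m)) * (1 / (α + 1)) + m * f (b / m) * 1 := by
    have : (fun x => (t x ^ α * f a + m * (1 - t x ^ α) * f (b / m)) * (K / x ^ 2))
        = fun x => (f a - m * f (b / m)) * (t x ^ α * (K / x ^ 2))
          + m * f (b / m) * (K / x ^ 2) := by
      funext x; ring
    rw [this, intervalIntegral.integral_add (hint1.const_mul _) (hint0.const_mul _),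
      intervalIntegral.integral_const_mul, intervalIntegral.integral_const_mul, hI1, hI0]
  -- rewrite lhs
  have hlhs : K * (∫ x in a..b, f x / x ^ 2) = ∫ x in a..b, f x * (K / x ^ 2) := by
    rw [← intervalIntegral.integral_const_mul]
    congr 1; funext x; ring
  calc (a * b / (b - a)) * ∫ x in a..b, f x / x ^ 2
      = ∫ x in a..b, f x * (K / x ^ 2) := hlhs
    _ ≤ (f a - m * f (b / m)) * (1 / (α + 1)) + m * f (b / m) * 1 := by
        rw [← hsplit]; exact key
    _ = (f a + α * m * f (b / m)) / (α + 1) := by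
        field_simp
        ring
end

section
/- Let f : (0,∞) → ℝ be harmonically (α,m)-convex with α ∈ [0,1], m ∈ (0,1], 0 < a < b, and f integrable on [a,b]. Then (ab/(b-a)) ∫_a^b f(x)/x² dx ≤ min{ (f(a) + α m f(b/m))/(α+1), (f(b) + α m f(a/m))/(α+1) }. -/
open intervalIntegral MeasureTheory

private lemma integral_aux (α a b c d : ℝ) (hα : 0 ≤ α) (ha : 0 < a) (hab : a < b)
    (hc : c ≠ 0) :
    ∫ x in a..b, (c * x⁻¹ + d) ^ α / x ^ 2
      = ((c * a⁻¹ + d) ^ (α + 1) - (c * b⁻¹ + d) ^ (α + 1)) / (c * (α + 1)) := by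
  have hTc : ContinuousOn (fun x : ℝ => c * x⁻¹ + d) (Set.uIcc a b) := by
    intro x hx
    rw [Set.uIcc_of_le hab.le] at hx
    have hx0 : x ≠ 0 := (lt_of_lt_of_le ha hx.1).ne'
    exact ((continuousAt_const.mul (continuousAt_inv₀ hx0)).add continuousAt_const).continuousWithinAt
  have hcont : ContinuousOn (fun x : ℝ => (α + 1) * (c * x⁻¹ + d) ^ α * (-c / x ^ 2))
      (Set.uIcc a b) := by
    apply ContinuousOn.mul
    · exact continuousOn_const.mul (hTc.rpow_const (fun x _ => Or.inr hα))
    · apply ContinuousOn.div continuousOn_const (continuousOn_pow 2)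
      intro x hx
      rw [Set.uIcc_of_le hab.le] at hx
      have hx0 : x ≠ 0 := (lt_of_lt_of_le ha hx.1).ne'
      positivity
  have key : ∫ x in a..b, (α + 1) * (c * x⁻¹ + d) ^ α * (-c / x ^ 2)
      = (c * b⁻¹ + d) ^ (α + 1) - (c * a⁻¹ + d) ^ (α + 1) := by
    apply intervalIntegral.integral_eq_sub_of_hasDerivAt
      (f := fun x => (c * x⁻¹ + d) ^ (α + 1))
    · intro x hx
      rw [Set.uIcc_of_le hab.le] at hx
      have hx0 : x ≠ 0 := (lt_of_lt_of_le ha hx.1).ne'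
      have h1 : HasDerivAt (fun x : ℝ => c * x⁻¹ + d) (c * -(x ^ 2)⁻¹) x :=
        ((hasDerivAt_inv hx0).const_mul c).add_const d
      have h2 : HasDerivAt (fun y : ℝ => y ^ (α + 1))
          ((α + 1) * (c * x⁻¹ + d) ^ α) (c * x⁻¹ + d) := by
        have := Real.hasDerivAt_rpow_const (x := c * x⁻¹ + d) (p := α + 1)
          (Or.inr (by linarith))
        simpa using this
      have := h2.comp x h1
      convert this using 1
      · rfl
      · rfl
      · ring
    · exact hcont.intervalIntegrable
  have h3 : ∫ x in a..b, (α + 1) * (c * x⁻¹ + d) ^ α * (-c / x ^ 2)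
      = (-(c * (α + 1))) * ∫ x in a..b, (c * x⁻¹ + d) ^ α / x ^ 2 := by
    rw [← intervalIntegral.integral_const_mul]
    apply intervalIntegral.integral_congr
    intro x hx
    ring
  rw [h3] at key
  have hne : c * (α + 1) ≠ 0 := mul_ne_zero hc (by linarith)
  rw [eq_div_iff hne]
  linear_combination -key

private lemma case_aux (f : ℝ → ℝ) (α m a b c d p q : ℝ) (hα : 0 ≤ α) (hm : 0 < m)
    (ha : 0 < a) (hab : a < b) (hc : c ≠ 0)
    (hval : ((c * a⁻¹ + d) ^ (α + 1) - (c * b⁻¹ + d) ^ (α + 1)) / (c * (α + 1))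
      = (b - a) / (a * b * (α + 1)))
    (hpt : ∀ x ∈ Set.Icc a b, f x ≤ (c * x⁻¹ + d) ^ α * p + m * (1 - (c * x⁻¹ + d) ^ α) * q)
    (hint : IntervalIntegrable f volume a b) :
    (a * b / (b - a)) * ∫ x in a..b, f x / x ^ 2 ≤ (p + α * m * q) / (α + 1) := by
  have hb : 0 < b := ha.trans hab
  have hxne : ∀ x ∈ Set.uIcc a b, x ≠ 0 := by
    intro x hx
    rw [Set.uIcc_of_le hab.le] at hx
    exact (lt_of_lt_of_le ha hx.1).ne'
  have hTc : ContinuousOn (fun x : ℝ => c * x⁻¹ + d) (Set.uIcc a b) := fun x hx =>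
    ((continuousAt_const.mul (continuousAt_inv₀ (hxne x hx))).add continuousAt_const).continuousWithinAt
  have hx2 : ContinuousOn (fun x : ℝ => ((x:ℝ) ^ 2)⁻¹) (Set.uIcc a b) := fun x hx =>
    (continuousAt_inv₀ (by have := hxne x hx; positivity)).comp
      (continuousAt_pow x 2) |>.continuousWithinAt
  have hRcont : ContinuousOn
      (fun x : ℝ => ((c * x⁻¹ + d) ^ α * p + m * (1 - (c * x⁻¹ + d) ^ α) * q) / x ^ 2)
      (Set.uIcc a b) := by
    have hrp : ContinuousOn (fun x : ℝ => (c * x⁻¹ + d) ^ α) (Set.uIcc a b) :=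
      hTc.rpow_const (fun x _ => Or.inr hα)
    apply ContinuousOn.div _ (continuousOn_pow 2) (fun x hx => by have := hxne x hx; positivity)
    exact (hrp.mul continuousOn_const).add
      ((continuousOn_const.mul (continuousOn_const.sub hrp)).mul continuousOn_const)
  have hfint : IntervalIntegrable (fun x => f x / x ^ 2) volume a b := by
    have := hint.mul_continuousOn hx2
    simpa [div_eq_mul_inv] using this
  have hmono : ∫ x in a..b, f x / x ^ 2
      ≤ ∫ x in a..b, ((c * x⁻¹ + d) ^ α * p + m * (1 - (c * x⁻¹ + d) ^ α) * q) / x ^ 2 := by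
    apply intervalIntegral.integral_mono_on hab.le hfint (hRcont.intervalIntegrable)
    intro x hx
    have hx0 : 0 < x := lt_of_lt_of_le ha hx.1
    have h2 : (0:ℝ) < x ^ 2 := by positivity
    exact div_le_div_of_nonneg_right (hpt x hx) h2.le
  have hIT : ∫ x in a..b, (c * x⁻¹ + d) ^ α / x ^ 2 = (b - a) / (a * b * (α + 1)) := by
    rw [integral_aux α a b c d hα ha hab hc]; exact hval
  have hI0 : ∫ x in a..b, (1:ℝ) / x ^ 2 = a⁻¹ - b⁻¹ := by
    have h := integral_aux 0 a b 1 0 le_rfl ha hab one_ne_zero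
    simpa using h
  have h4 : ∫ x in a..b, ((c * x⁻¹ + d) ^ α * p + m * (1 - (c * x⁻¹ + d) ^ α) * q) / x ^ 2
      = (p - m * q) * ((b - a) / (a * b * (α + 1))) + (m * q) * (a⁻¹ - b⁻¹) := by
    rw [← hIT, ← hI0, ← intervalIntegral.integral_const_mul, ← intervalIntegral.integral_const_mul,
      ← intervalIntegral.integral_add]
    · apply intervalIntegral.integral_congr
      intro x hx
      ring
    · apply ContinuousOn.intervalIntegrable
      exact continuousOn_const.mul ((hTc.rpow_const (fun x _ => Or.inr hα)).div
        (continuousOn_pow 2) (fun x hx => by have := hxne x hx; positivity))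
    · apply ContinuousOn.intervalIntegrable
      exact continuousOn_const.mul (continuousOn_const.div (continuousOn_pow 2)
        (fun x hx => by have := hxne x hx; positivity))
  have hfin : ∫ x in a..b, f x / x ^ 2
      ≤ (p - m * q) * ((b - a) / (a * b * (α + 1))) + (m * q) * (a⁻¹ - b⁻¹) := by
    rw [← h4]; exact hmono
  have hpos : 0 < a * b / (b - a) := by
    apply div_pos (by positivity); linarith
  have heq : (a * b / (b - a)) *
      ((p - m * q) * ((b - a) / (a * b * (α + 1))) + (m * q) * (a⁻¹ - b⁻¹))
      = (p + α * m * q) / (α + 1) := by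
    have h1 : (b:ℝ) - a ≠ 0 := by linarith
    have h2 : (α:ℝ) + 1 ≠ 0 := by linarith
    field_simp
    ring
  calc (a * b / (b - a)) * ∫ x in a..b, f x / x ^ 2
      ≤ (a * b / (b - a)) *
        ((p - m * q) * ((b - a) / (a * b * (α + 1))) + (m * q) * (a⁻¹ - b⁻¹)) :=
        mul_le_mul_of_nonneg_left hfin hpos.le
    _ = (p + α * m * q) / (α + 1) := heq

theorem hermite_hadamard_right_harmonically_am_convex_min
    (f : ℝ → ℝ) (α m a b : ℝ) (hα : α ∈ Set.Icc (0:ℝ) 1) (hm : m ∈ Set.Ioc (0:ℝ) 1)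
    (ha : 0 < a) (hab : a < b)
    (hconv : ∀ x : ℝ, 0 < x → ∀ y : ℝ, 0 < y → ∀ t ∈ Set.Icc (0:ℝ) 1,
      f (m * x * y / (m * t * y + (1 - t) * x)) ≤ t ^ α * f x + m * (1 - t ^ α) * f y)
    (hint : IntervalIntegrable f volume a b) :
    (a * b / (b - a)) * ∫ x in a..b, f x / x ^ 2 ≤
      min ((f a + α * m * f (b / m)) / (α + 1)) ((f b + α * m * f (a / m)) / (α + 1)) := by
  obtain ⟨hα0, hα1⟩ := hα
  obtain ⟨hm0, hm1⟩ := hm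
  have hb : 0 < b := ha.trans hab
  have hba : (0:ℝ) < b - a := by linarith
  have hα1' : (0:ℝ) < α + 1 := by linarith
  have hmne : m ≠ 0 := hm0.ne'
  refine le_min ?_ ?_
  · -- first bound, T x = a(b-x)/(x(b-a)) : c = a*b/(b-a), d = -(a/(b-a))
    have := case_aux f α m a b (a * b / (b - a)) (-(a / (b - a))) (f a) (f (b / m))
      hα0 hm0 ha hab (by positivity) ?_ ?_ hint
    · exact this
    · have e1 : a * b / (b - a) * a⁻¹ + -(a / (b - a)) = 1 := by field_simp; ring
      have e2 : a * b / (b - a) * b⁻¹ + -(a / (b - a)) = 0 := by field_simp; ring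
      rw [e1, e2, Real.one_rpow, Real.zero_rpow hα1'.ne']
      field_simp
      norm_num
    · intro x hx
      have hx0 : 0 < x := lt_of_lt_of_le ha hx.1
      set T := a * b / (b - a) * x⁻¹ + -(a / (b - a)) with hT
      have hTeq : T = a * (b - x) / (x * (b - a)) := by
        rw [hT]; field_simp; ring
      have hT0 : 0 ≤ T := by
        rw [hTeq]
        apply div_nonneg (mul_nonneg ha.le (by linarith [hx.2])) (by positivity)
      have hT1 : T ≤ 1 := by
        rw [hTeq, div_le_one (by positivity)]
        nlinarith [hx.1]
      have hc := hconv a ha (b / m) (by positivity) T ⟨hT0, hT1⟩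
      have hden : m * T * (b / m) + (1 - T) * a = a * b / x := by
        rw [hTeq]; field_simp; ring
      have harg : m * a * (b / m) / (a * b / x) = x := by
        field_simp
      rw [hden, harg] at hc
      exact hc
  · -- second bound, S x = b(x-a)/(x(b-a)) : c = -(a*b/(b-a)), d = b/(b-a)
    have := case_aux f α m a b (-(a * b / (b - a))) (b / (b - a)) (f b) (f (a / m))
      hα0 hm0 ha hab (neg_ne_zero.mpr (by positivity)) ?_ ?_ hint
    · exact this
    · have e1 : -(a * b / (b - a)) * a⁻¹ + b / (b - a) = 0 := by field_simp; ring
      have e2 : -(a * b / (b - a)) * b⁻¹ + b / (b - a) = 1 := by field_simp; ring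
      rw [e1, e2, Real.one_rpow, Real.zero_rpow hα1'.ne']
      field_simp
      ring
    · intro x hx
      have hx0 : 0 < x := lt_of_lt_of_le ha hx.1
      set S := -(a * b / (b - a)) * x⁻¹ + b / (b - a) with hS
      have hSeq : S = b * (x - a) / (x * (b - a)) := by
        rw [hS]; field_simp; ring
      have hS0 : 0 ≤ S := by
        rw [hSeq]
        apply div_nonneg (mul_nonneg hb.le (by linarith [hx.1])) (by positivity)
      have hS1 : S ≤ 1 := by
        rw [hSeq, div_le_one (by positivity)]
        nlinarith [hx.2]
      have hc := hconv b hb (a / m) (by positivity) S ⟨hS0, hS1⟩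
      have hden : m * S * (a / m) + (1 - S) * b = a * b / x := by
        rw [hSeq]; field_simp; ring
      have harg : m * b * (a / m) / (a * b / x) = x := by
        field_simp
      rw [hden, harg] at hc
      exact hc
end

section
/- Let f : (0,∞) → ℝ be harmonically (α,1)-convex with α ∈ [0,1], 0 < a < b, f integrable on [a,b]. Then (ab/(b-a)) ∫_a^b f(x)/x² dx ≤ min{ (f(a) + α f(b))/(α+1), (f(b) + α f(a))/(α+1) }. -/
open intervalIntegral MeasureTheory

theorem hermite_hadamard_right_harmonically_alpha_one_convex
    (f : ℝ → ℝ) (α a b : ℝ) (hα : α ∈ Set.Icc (0:ℝ) 1)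
    (ha : 0 < a) (hab : a < b)
    (hconv : ∀ x : ℝ, 0 < x → ∀ y : ℝ, 0 < y → ∀ t ∈ Set.Icc (0:ℝ) 1,
      f (x * y / (t * y + (1 - t) * x)) ≤ t ^ α * f x + (1 - t ^ α) * f y)
    (hint : IntervalIntegrable f volume a b) :
    (a * b / (b - a)) * ∫ x in a..b, f x / x ^ 2 ≤
      min ((f a + α * f b) / (α + 1)) ((f b + α * f a) / (α + 1)) := by
  obtain ⟨hα0, hα1⟩ := hα
  have hb : 0 < b := ha.trans hab
  have hba : (0:ℝ) < b - a := by linarith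
  have hab0 : (0:ℝ) < a * b := mul_pos ha hb
  set d : ℝ → ℝ := fun t => a + t * (b - a) with hd_def
  set φ : ℝ → ℝ := fun t => a * b / d t with hφ_def
  set φ' : ℝ → ℝ := fun t => -(a * b * (b - a)) / (d t) ^ 2 with hφ'_def
  have hdpos : ∀ t ∈ Set.Icc (0:ℝ) 1, 0 < d t := by
    intro t ht
    have := ht.1
    simp only [hd_def]
    nlinarith
  have hφpos : ∀ t ∈ Set.Icc (0:ℝ) 1, 0 < φ t := fun t ht => div_pos hab0 (hdpos t ht)
  -- derivative
  have hderiv : ∀ t ∈ Set.Icc (0:ℝ) 1, HasDerivWithinAt φ (φ' t) (Set.Icc 0 1) t := by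
    intro t ht
    have h1 : HasDerivAt d (b - a) t := by
      have := ((hasDerivAt_id t).mul_const (b - a)).const_add a
      rw [one_mul] at this
      exact this
    have hne : d t ≠ 0 := (hdpos t ht).ne'
    have h2 : HasDerivAt φ ((0 * d t - a * b * (b - a)) / (d t) ^ 2) t :=
      (hasDerivAt_const t (a * b)).div h1 hne
    have : (0 * d t - a * b * (b - a)) / (d t) ^ 2 = φ' t := by
      simp only [hφ'_def]; ring
    rw [this] at h2
    exact h2.hasDerivWithinAt
  -- injectivity
  have hinj : Set.InjOn φ (Set.Icc (0:ℝ) 1) := by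
    intro t1 h1 t2 h2 h
    have hd1 := hdpos t1 h1
    have hd2 := hdpos t2 h2
    simp only [hφ_def] at h
    rw [div_eq_div_iff hd1.ne' hd2.ne'] at h
    have : d t1 = d t2 := by nlinarith
    simp only [hd_def] at this
    nlinarith
  -- image
  have himg : φ '' Set.Icc (0:ℝ) 1 = Set.Icc a b := by
    ext x
    constructor
    · rintro ⟨t, ht, rfl⟩
      have hdt := hdpos t ht
      have h1 := ht.1; have h2 := ht.2
      constructor
      · rw [le_div_iff₀ hdt]; simp only [hd_def]
        nlinarith [mul_nonneg ha.le (mul_nonneg (sub_nonneg.mpr h2) hba.le)]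
      · rw [div_le_iff₀ hdt]; simp only [hd_def]
        nlinarith [mul_nonneg hb.le (mul_nonneg h1 hba.le)]
    · rintro ⟨hx1, hx2⟩
      have hx : 0 < x := ha.trans_le hx1
      refine ⟨(a * b / x - a) / (b - a), ⟨?_, ?_⟩, ?_⟩
      · apply div_nonneg _ hba.le
        rw [sub_nonneg, le_div_iff₀ hx]; nlinarith
      · rw [div_le_one hba, sub_le_sub_iff_right, div_le_iff₀ hx]
        nlinarith
      · simp only [hφ_def, hd_def]
        have hden : a + (a * b / x - a) / (b - a) * (b - a) = a * b / x := by
          field_simp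
          ring
        rw [hden, eq_comm, eq_div_iff (by positivity : a * b / x ≠ 0)]
        field_simp
  -- integrability of f x / x^2 on Icc a b
  have hfIcc : IntegrableOn f (Set.Icc a b) := by
    rw [integrableOn_Icc_iff_integrableOn_Ioc]
    exact (intervalIntegrable_iff_integrableOn_Ioc_of_le hab.le).mp hint
  have hcont : ContinuousOn (fun x : ℝ => ((x:ℝ) ^ 2)⁻¹) (Set.Icc a b) := by
    apply ContinuousOn.inv₀ (continuous_pow 2).continuousOn
    intro x hx
    have : 0 < x := ha.trans_le hx.1
    positivity
  have hfx2 : IntegrableOn (fun x => f x / x ^ 2) (Set.Icc a b) := by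
    have := hfIcc.mul_continuousOn hcont isCompact_Icc
    simpa [div_eq_mul_inv] using this
  -- change of variables
  have key : ∫ x in Set.Icc a b, f x / x ^ 2 =
      ∫ t in Set.Icc (0:ℝ) 1, |φ' t| • (f (φ t) / (φ t) ^ 2) := by
    rw [← himg, integral_image_eq_integral_abs_deriv_smul measurableSet_Icc hderiv hinj]
  have hptwise : ∀ t ∈ Set.Icc (0:ℝ) 1,
      |φ' t| • (f (φ t) / (φ t) ^ 2) = ((b - a) / (a * b)) * f (φ t) := by
    intro t ht
    have hdt := hdpos t ht
    have hφ'abs : |φ' t| = a * b * (b - a) / (d t) ^ 2 := by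
      simp only [hφ'_def]
      rw [abs_div, abs_neg, abs_of_pos (by positivity), abs_of_pos (by positivity)]
    rw [hφ'abs, smul_eq_mul]
    simp only [hφ_def]
    rw [div_pow]
    field_simp
  have key2 : ∫ x in Set.Icc a b, f x / x ^ 2 =
      ((b - a) / (a * b)) * ∫ t in Set.Icc (0:ℝ) 1, f (φ t) := by
    rw [key, setIntegral_congr_fun measurableSet_Icc hptwise, MeasureTheory.integral_const_mul]
  -- integrability of f ∘ φ
  have hcomp : IntegrableOn (fun t => f (φ t)) (Set.Icc (0:ℝ) 1) := by
    have h1 : IntegrableOn (fun t => |φ' t| • (f (φ t) / (φ t) ^ 2)) (Set.Icc (0:ℝ) 1) := by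
      have := (integrableOn_image_iff_integrableOn_abs_deriv_smul measurableSet_Icc hderiv hinj
        (fun x => f x / x ^ 2)).mp (by rw [himg]; exact hfx2)
      simpa using this
    have h2 : IntegrableOn (fun t => ((b - a) / (a * b)) * f (φ t)) (Set.Icc (0:ℝ) 1) :=
      h1.congr_fun hptwise measurableSet_Icc
    have h3 := h2.const_mul ((a * b) / (b - a))
    have : ∀ t : ℝ, (a * b) / (b - a) * (((b - a) / (a * b)) * f (φ t)) = f (φ t) := by
      intro t; field_simp
    simp only [this] at h3
    exact h3
  -- the rpow integral
  have hrpInt : IntervalIntegrable (fun t : ℝ => t ^ α) volume 0 1 :=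
    intervalIntegrable_rpow (Or.inl hα0)
  have hrp : ∫ t in (0:ℝ)..1, t ^ α = 1 / (α + 1) := by
    rw [integral_rpow (Or.inl (by linarith : (-1:ℝ) < α))]
    rw [Real.one_rpow, Real.zero_rpow (by linarith : α + 1 ≠ 0)]
    ring
  have hIccInterval : ∀ g : ℝ → ℝ, ∫ t in Set.Icc (0:ℝ) 1, g t = ∫ t in (0:ℝ)..1, g t := by
    intro g
    rw [integral_Icc_eq_integral_Ioc, intervalIntegral.integral_of_le zero_le_one]
  -- bound 1
  have hR1int : IntervalIntegrable (fun t : ℝ => t ^ α * f a + (1 - t ^ α) * f b) volume 0 1 :=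
    (hrpInt.mul_const (f a)).add ((intervalIntegrable_const.sub hrpInt).mul_const (f b))
  have hR1 : ∫ t in (0:ℝ)..1, (t ^ α * f a + (1 - t ^ α) * f b) = (f a + α * f b) / (α + 1) := by
    rw [intervalIntegral.integral_add (hrpInt.mul_const (f a))
        ((intervalIntegrable_const.sub hrpInt).mul_const (f b)),
      intervalIntegral.integral_mul_const, intervalIntegral.integral_mul_const,
      intervalIntegral.integral_sub intervalIntegrable_const hrpInt,
      intervalIntegral.integral_const, hrp]
    have : α + 1 ≠ 0 := by linarith
    field_simp
    simp only [sub_zero, smul_eq_mul, mul_one]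
    ring
  have hb1 : ∫ t in Set.Icc (0:ℝ) 1, f (φ t) ≤ (f a + α * f b) / (α + 1) := by
    rw [← hR1, ← hIccInterval]
    apply setIntegral_mono_on hcomp _ measurableSet_Icc
    · intro t ht
      have h := hconv a ha b hb t ht
      have e : a * b / (t * b + (1 - t) * a) = φ t := by
        simp only [hφ_def, hd_def]; ring_nf
      rw [e] at h
      exact h
    · exact (intervalIntegrable_iff_integrableOn_Icc_of_le zero_le_one).mp hR1int
  -- bound 2
  have hrpInt2 : IntervalIntegrable (fun t : ℝ => (1 - t) ^ α) volume 0 1 := by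
    have := hrpInt.comp_sub_left 1
    simpa using this.symm
  have hrp2 : ∫ t in (0:ℝ)..1, (1 - t) ^ α = 1 / (α + 1) := by
    rw [intervalIntegral.integral_comp_sub_left (fun s : ℝ => s ^ α) 1]
    simpa using hrp
  have hR2int : IntervalIntegrable (fun t : ℝ => (1 - t) ^ α * f b + (1 - (1 - t) ^ α) * f a)
      volume 0 1 :=
    (hrpInt2.mul_const (f b)).add ((intervalIntegrable_const.sub hrpInt2).mul_const (f a))
  have hR2 : ∫ t in (0:ℝ)..1, ((1 - t) ^ α * f b + (1 - (1 - t) ^ α) * f a)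
      = (f b + α * f a) / (α + 1) := by
    rw [intervalIntegral.integral_add (hrpInt2.mul_const (f b))
        ((intervalIntegrable_const.sub hrpInt2).mul_const (f a)),
      intervalIntegral.integral_mul_const, intervalIntegral.integral_mul_const,
      intervalIntegral.integral_sub intervalIntegrable_const hrpInt2,
      intervalIntegral.integral_const, hrp2]
    have : α + 1 ≠ 0 := by linarith
    field_simp
    simp only [sub_zero, smul_eq_mul, mul_one]
    ring
  have hb2 : ∫ t in Set.Icc (0:ℝ) 1, f (φ t) ≤ (f b + α * f a) / (α + 1) := by
    rw [← hR2, ← hIccInterval]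
    apply setIntegral_mono_on hcomp _ measurableSet_Icc
    · intro t ht
      have hmem : (1 - t) ∈ Set.Icc (0:ℝ) 1 := ⟨by linarith [ht.2], by linarith [ht.1]⟩
      have h := hconv b hb a ha (1 - t) hmem
      have e : b * a / ((1 - t) * a + (1 - (1 - t)) * b) = φ t := by
        simp only [hφ_def, hd_def]
        rw [show (1 - t) * a + (1 - (1 - t)) * b = a + t * (b - a) by ring]
        rw [mul_comm b a]
      rw [e] at h
      exact h
    · exact (intervalIntegrable_iff_integrableOn_Icc_of_le zero_le_one).mp hR2int
  -- conclude
  have hInt : ∫ x in a..b, f x / x ^ 2 = ((b - a) / (a * b)) * ∫ t in Set.Icc (0:ℝ) 1, f (φ t) := by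
    rw [intervalIntegral.integral_of_le hab.le, ← integral_Icc_eq_integral_Ioc, key2]
  rw [hInt]
  have hsimp : a * b / (b - a) * (((b - a) / (a * b)) * ∫ t in Set.Icc (0:ℝ) 1, f (φ t))
      = ∫ t in Set.Icc (0:ℝ) 1, f (φ t) := by
    rw [← mul_assoc]
    rw [show a * b / (b - a) * ((b - a) / (a * b)) = 1 by field_simp]
    ring
  rw [hsimp]
  exact le_min hb1 hb2
end

section
/- Let f : I ⊂ ℝ\{0} → ℝ be differentiable on the interior of I, a, b ∈ I with 0 < a < b, and f' integrable on [a,b]. Then (f(a)+f(b))/2 − (ab/(b-a)) ∫_a^b f(x)/x² dx = (ab(b-a)/2) ∫_0^1 (1-2t)/(tb+(1-t)a)² · f'(ab/(tb+(1-t)a)) dt. -/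
open intervalIntegral MeasureTheory

set_option maxHeartbeats 1600000 in
theorem trapezoid_identity_harmonic
    (f : ℝ → ℝ) (I : Set ℝ) (h0 : (0:ℝ) ∉ I) (a b : ℝ) (haI : a ∈ I) (hbI : b ∈ I)
    (ha : 0 < a) (hab : a < b)
    (hdiff : DifferentiableOn ℝ f (interior I))
    (hsub : Set.Icc a b ⊆ interior I)
    (hint : IntervalIntegrable (deriv f) volume a b) :
    (f a + f b) / 2 - (a * b / (b - a)) * ∫ x in a..b, f x / x ^ 2 =
      (a * b * (b - a) / 2) *
        ∫ t in (0:ℝ)..1, (1 - 2 * t) / (t * b + (1 - t) * a) ^ 2 *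
          deriv f (a * b / (t * b + (1 - t) * a)) := by
  have hb : 0 < b := ha.trans hab
  have hba : 0 < b - a := sub_pos.2 hab
  -- abbreviations
  set G : ℝ → ℝ := fun t => t * b + (1 - t) * a with hG_def
  set φ : ℝ → ℝ := fun t => a * b / G t with hφ_def
  set D : ℝ → ℝ := fun t => -(a * b * (b - a)) / G t ^ 2 with hD_def
  have hGval : ∀ t, G t = t * b + (1 - t) * a := fun t => rfl
  have hgpos : ∀ t ∈ Set.Icc (0:ℝ) 1, 0 < G t := by
    intro t ht
    rw [hGval]
    nlinarith [ht.1, ht.2]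
  have hφmem : ∀ t ∈ Set.Icc (0:ℝ) 1, φ t ∈ Set.Icc a b := by
    intro t ht
    have h1 : a ≤ G t := by rw [hGval]; nlinarith [ht.1, ht.2]
    have h2 : G t ≤ b := by rw [hGval]; nlinarith [ht.1, ht.2]
    have hg0 := hgpos t ht
    constructor
    · rw [hφ_def, le_div_iff₀ hg0]; nlinarith
    · rw [hφ_def, div_le_iff₀ hg0]; nlinarith
  have hG' : ∀ t : ℝ, HasDerivAt G (b - a) t := by
    intro t
    have h : HasDerivAt (fun t : ℝ => t * b + (1 - t) * a) (1 * b + (0 - 1) * a) t :=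
      ((hasDerivAt_id t).mul_const b).add
        (((hasDerivAt_const t (1:ℝ)).sub (hasDerivAt_id t)).mul_const a)
    rw [hG_def]
    convert h using 1
    ring
  have hφ' : ∀ t : ℝ, G t ≠ 0 → HasDerivAt φ (D t) t := by
    intro t ht
    have h := (hasDerivAt_const t (a * b)).div (hG' t) ht
    rw [hφ_def, hD_def]
    convert h using 1
    · rfl
    · rfl
    · rfl
    · simp only [zero_mul, zero_sub]
  have hfd : ∀ x ∈ Set.Icc a b, HasDerivAt f (deriv f x) x := fun x hx =>
    (hdiff.differentiableAt (isOpen_interior.mem_nhds (hsub hx))).hasDerivAt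
  -- derivative of f ∘ φ
  have hcomp : ∀ t ∈ Set.Icc (0:ℝ) 1,
      HasDerivAt (fun s => f (φ s)) (deriv f (φ t) * D t) t := by
    intro t ht
    exact (hfd _ (hφmem t ht)).comp t (hφ' t (hgpos t ht).ne')
  -- integrability of the derivative of f ∘ φ
  have hint' : IntegrableOn (deriv f) (Set.Icc a b) := by
    rw [← intervalIntegrable_iff_integrableOn_Icc_of_le hab.le]
    exact hint
  have himg : φ '' Set.Icc 0 1 ⊆ Set.Icc a b := by
    rintro x ⟨t, ht, rfl⟩
    exact hφmem t ht
  have hInj : Set.InjOn φ (Set.Icc 0 1) := by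
    intro s hs t ht hst
    have hgs := hgpos s hs
    have hgt := hgpos t ht
    have hab0 : 0 < a * b := mul_pos ha hb
    rw [hφ_def] at hst
    simp only at hst
    have hGeq : G s = G t := by
      field_simp at hst
      nlinarith
    rw [hGval, hGval] at hGeq
    nlinarith
  have key : IntegrableOn (fun t => |D t| • deriv f (φ t)) (Set.Icc (0:ℝ) 1) := by
    exact (MeasureTheory.integrableOn_image_iff_integrableOn_abs_deriv_smul
      measurableSet_Icc (fun t ht => (hφ' t (hgpos t ht).ne').hasDerivWithinAt) hInj
      (deriv f)).mp (hint'.mono_set himg)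
  have hv'int : IntervalIntegrable (fun t => deriv f (φ t) * D t) volume 0 1 := by
    rw [intervalIntegrable_iff_integrableOn_Icc_of_le zero_le_one]
    have keyneg : IntegrableOn (fun t => -(|D t| • deriv f (φ t))) (Set.Icc (0:ℝ) 1) := key.neg
    refine keyneg.congr_fun ?_ measurableSet_Icc
    intro t ht
    have hg0 := hgpos t ht
    have hDneg : D t < 0 := by
      rw [hD_def]
      apply div_neg_of_neg_of_pos
      · nlinarith [mul_pos ha hb]
      · positivity
    have habs : |D t| = -D t := abs_of_neg hDneg
    simp only [habs, smul_eq_mul]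
    ring
  -- integration by parts on [0,1]
  have hparts : ∫ t in (0:ℝ)..1, (1 - 2 * t) * (deriv f (φ t) * D t)
      = (1 - 2 * 1) * f (φ 1) - (1 - 2 * 0) * f (φ 0)
        - ∫ t in (0:ℝ)..1, (-2) * f (φ t) := by
    have hu : ∀ t ∈ Set.uIcc (0:ℝ) 1, HasDerivAt (fun s : ℝ => 1 - 2 * s) (-2) t := by
      intro t ht
      have h : HasDerivAt (fun s : ℝ => 1 - 2 * s) (0 - 2 * 1) t :=
        (hasDerivAt_const t (1:ℝ)).sub ((hasDerivAt_id t).const_mul 2)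
      convert h using 1
      ring
    have hv : ∀ t ∈ Set.uIcc (0:ℝ) 1, HasDerivAt (fun s => f (φ s)) (deriv f (φ t) * D t) t := by
      intro t ht
      rw [Set.uIcc_of_le zero_le_one] at ht
      exact hcomp t ht
    exact intervalIntegral.integral_mul_deriv_eq_deriv_mul hu hv
      (intervalIntegrable_const) hv'int
  have hG1 : G 1 = b := by rw [hGval]; ring
  have hG0 : G 0 = a := by rw [hGval]; ring
  have hφ1 : φ 1 = a := by
    rw [hφ_def]
    show a * b / G 1 = a
    rw [hG1]
    exact mul_div_cancel_right₀ a hb.ne'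
  have hφ0 : φ 0 = b := by
    rw [hφ_def]
    show a * b / G 0 = b
    rw [hG0, mul_comm]
    exact mul_div_cancel_right₀ b ha.ne'
  -- substitution for ∫ f ∘ φ
  have hfc : ContinuousOn f (Set.Icc a b) := (hdiff.continuousOn.mono hsub)
  have hGcont : Continuous G := by
    rw [hG_def]
    continuity
  have hsubst : ∫ t in (0:ℝ)..1, f (φ t) = (a * b / (b - a)) * ∫ x in a..b, f x / x ^ 2 := by
    have hcφ : ∀ t ∈ Set.uIcc (0:ℝ) 1, HasDerivAt φ (D t) t := by
      intro t ht
      rw [Set.uIcc_of_le zero_le_one] at ht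
      exact hφ' t (hgpos t ht).ne'
    have hcD : ContinuousOn D (Set.uIcc (0:ℝ) 1) := by
      rw [Set.uIcc_of_le zero_le_one, hD_def]
      apply ContinuousOn.div continuousOn_const ((hGcont.pow 2).continuousOn)
      intro t ht
      exact pow_ne_zero 2 (hgpos t ht).ne'
    have hsub2 : φ '' Set.uIcc (0:ℝ) 1 ⊆ Set.Icc a b := by
      rw [Set.uIcc_of_le zero_le_one]; exact himg
    have hgcont : ContinuousOn (fun x => -(a * b / (b - a)) * (f x / x ^ 2))
        (φ '' Set.uIcc (0:ℝ) 1) := by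
      refine ContinuousOn.mono ?_ hsub2
      apply ContinuousOn.mul continuousOn_const
      apply ContinuousOn.div hfc (continuous_pow 2).continuousOn
      intro x hx
      exact pow_ne_zero 2 (lt_of_lt_of_le ha hx.1).ne'
    have heq := intervalIntegral.integral_comp_smul_deriv' hcφ hcD hgcont
    have hlhs : ∫ t in (0:ℝ)..1, D t • ((fun x => -(a * b / (b - a)) * (f x / x ^ 2)) ∘ φ) t
        = ∫ t in (0:ℝ)..1, f (φ t) := by
      apply intervalIntegral.integral_congr
      intro t ht
      rw [Set.uIcc_of_le zero_le_one] at ht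
      have hg0 := hgpos t ht
      have hDt : D t = -(a * b * (b - a)) / G t ^ 2 := rfl
      have hφt : φ t = a * b / G t := rfl
      simp only [Function.comp_apply, smul_eq_mul]
      rw [hDt, hφt]
      field_simp
    rw [hlhs, hφ0, hφ1] at heq
    rw [heq, intervalIntegral.integral_symm a b]
    rw [intervalIntegral.integral_const_mul]
    ring
  -- rewrite the RHS integrand
  have hRHS : ∫ t in (0:ℝ)..1, (1 - 2 * t) / (t * b + (1 - t) * a) ^ 2 *
        deriv f (a * b / (t * b + (1 - t) * a))
      = (-1 / (a * b * (b - a))) * ∫ t in (0:ℝ)..1, (1 - 2 * t) * (deriv f (φ t) * D t) := by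
    rw [← intervalIntegral.integral_const_mul]
    apply intervalIntegral.integral_congr
    intro t ht
    rw [Set.uIcc_of_le zero_le_one] at ht
    have hg0 := hgpos t ht
    show (1 - 2 * t) / (t * b + (1 - t) * a) ^ 2 * deriv f (a * b / (t * b + (1 - t) * a))
      = -1 / (a * b * (b - a)) * ((1 - 2 * t) * (deriv f (φ t) * D t))
    have hGt : t * b + (1 - t) * a = G t := rfl
    have hφt : a * b / G t = φ t := rfl
    have hDt : D t = -(a * b * (b - a)) / G t ^ 2 := rfl
    rw [hGt, hφt, hDt]
    field_simp [ha.ne', hb.ne', hba.ne', hg0.ne']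
  rw [hRHS, hparts, hφ0, hφ1]
  rw [intervalIntegral.integral_const_mul, hsubst]
  field_simp
  ring
end

section
/- For 0 < a < b, q ≥ 1, α ∈ [0,1], we have ∫_0^1 |1-2t| t^α/(tb+(1-t)a)^{2q} dt = β(1,α+2)/b^{2q} · ₂F₁(2q,1;α+3;1−a/b) − β(2,α+1)/b^{2q} · ₂F₁(2q,2;α+3;1−a/b) + 2^{2q−α} β(2,α+1)/(a+b)^{2q} · ₂F₁(2q,2;α+3;1−2a/(a+b)). -/
open intervalIntegral MeasureTheory

noncomputable def betaFn (x y : ℝ) : ℝ :=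
  ∫ t in (0:ℝ)..1, t ^ (x - 1) * (1 - t) ^ (y - 1)

noncomputable def hyp2F1 (a b c z : ℝ) : ℝ :=
  (1 / betaFn b (c - b)) * ∫ t in (0:ℝ)..1, t ^ (b - 1) * (1 - t) ^ (c - b - 1) * (1 - z * t) ^ (-a)

lemma ii_aux {a b q α : ℝ} (ha : 0 < a) (hab : a ≤ b) (hα0 : 0 ≤ α)
    {u v : ℝ} (hu : 0 ≤ u) (hv : v ≤ 1) (huv : u ≤ v) (p : ℝ → ℝ) (hp : Continuous p) :
    IntervalIntegrable (fun s => p s * (s ^ α * (s * b + (1 - s) * a) ^ (-(2 * q))))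
      volume u v := by
  apply ContinuousOn.intervalIntegrable
  have hsub : Set.uIcc u v ⊆ Set.Icc (0:ℝ) 1 := by
    rw [Set.uIcc_of_le huv]; exact Set.Icc_subset_Icc hu hv
  apply ContinuousOn.mul hp.continuousOn
  apply ContinuousOn.mul
  · exact continuousOn_id.rpow_const fun x _ => Or.inr hα0
  · apply ContinuousOn.rpow_const (by fun_prop)
    intro x hx
    left
    have hx' := hsub hx
    nlinarith [hx'.1, hx'.2]

theorem lam_hypergeometric (a b q α : ℝ) (ha : 0 < a) (hab : a < b) (hq : 1 ≤ q)
    (hα : α ∈ Set.Icc (0:ℝ) 1) :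
    ∫ t in (0:ℝ)..1, |1 - 2 * t| * t ^ α / (t * b + (1 - t) * a) ^ (2 * q) =
      betaFn 1 (α + 2) / b ^ (2 * q) * hyp2F1 (2 * q) 1 (α + 3) (1 - a / b)
        - betaFn 2 (α + 1) / b ^ (2 * q) * hyp2F1 (2 * q) 2 (α + 3) (1 - a / b)
        + 2 ^ (2 * q - α) * betaFn 2 (α + 1) / (a + b) ^ (2 * q) *
            hyp2F1 (2 * q) 2 (α + 3) (1 - 2 * a / (a + b)) := by
  have hb : 0 < b := ha.trans hab
  have hα0 : 0 ≤ α := hα.1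
  have hα1 : 0 ≤ α + 1 := by linarith
  have hD : ∀ s ∈ Set.Icc (0:ℝ) 1, 0 < s * b + (1 - s) * a := by
    intro s hs'; nlinarith [hs'.1, hs'.2]
  have hbne : b ^ (2 * q) ≠ 0 := (Real.rpow_pos_of_pos hb _).ne'
  have habne : (a + b) ^ (2 * q) ≠ 0 := (Real.rpow_pos_of_pos (by linarith) _).ne'
  have pow_split : ∀ x : ℝ, 0 ≤ x → x ^ (α + 1) = x * x ^ α := by
    intro x hx
    rcases eq_or_lt_of_le hx with h | h
    · rw [← h, Real.zero_rpow (by linarith), zero_mul]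
    · rw [Real.rpow_add_one h.ne', mul_comm]
  have hzb : a / b * b = a := div_mul_cancel₀ a hb.ne'
  -- beta positivity
  have hbeta1 : 0 < betaFn 1 (α + 2) := by
    unfold betaFn
    apply intervalIntegral_pos_of_pos_on
    · apply ContinuousOn.intervalIntegrable
      apply ContinuousOn.mul
      · exact continuousOn_id.rpow_const fun x _ => Or.inr (by norm_num)
      · exact (continuousOn_const.sub continuousOn_id).rpow_const fun x _ => Or.inr (by linarith)
    · intro x hx
      have h1 : (0:ℝ) < x ^ ((1:ℝ) - 1) := Real.rpow_pos_of_pos hx.1 ((1:ℝ)-1)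
      have h2 : (0:ℝ) < (1 - x) ^ (α + 2 - 1) := Real.rpow_pos_of_pos (by linarith [hx.2]) _
      positivity
    · norm_num
  have hbeta2 : 0 < betaFn 2 (α + 1) := by
    unfold betaFn
    apply intervalIntegral_pos_of_pos_on
    · apply ContinuousOn.intervalIntegrable
      apply ContinuousOn.mul
      · exact continuousOn_id.rpow_const fun x _ => Or.inr (by norm_num)
      · exact (continuousOn_const.sub continuousOn_id).rpow_const fun x _ => Or.inr (by linarith)
    · intro x hx
      have h1 : (0:ℝ) < x ^ ((2:ℝ) - 1) := Real.rpow_pos_of_pos hx.1 _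
      have h2 : (0:ℝ) < (1 - x) ^ (α + 1 - 1) := Real.rpow_pos_of_pos (by linarith [hx.2]) _
      positivity
    · norm_num
  -- Term A
  have hA : betaFn 1 (α + 2) / b ^ (2 * q) * hyp2F1 (2 * q) 1 (α + 3) (1 - a / b)
      = ∫ s in (0:ℝ)..1, s * (s ^ α * (s * b + (1 - s) * a) ^ (-(2 * q))) := by
    unfold hyp2F1
    rw [show α + 3 - 1 = α + 2 by ring]
    have h1 : ∀ J : ℝ, betaFn 1 (α + 2) / b ^ (2 * q) * (1 / betaFn 1 (α + 2) * J)
        = (b ^ (2 * q))⁻¹ * J := by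
      intro J; field_simp
    rw [h1, ← intervalIntegral.integral_const_mul]
    have h2 : Set.EqOn
        (fun t => (b ^ (2 * q))⁻¹ *
          (t ^ ((1:ℝ) - 1) * (1 - t) ^ (α + 2 - 1) * (1 - (1 - a / b) * t) ^ (-(2 * q))))
        (fun t => (fun s => s * (s ^ α * (s * b + (1 - s) * a) ^ (-(2 * q)))) (1 - t))
        (Set.uIcc (0:ℝ) 1) := by
      intro t ht
      rw [Set.uIcc_of_le zero_le_one] at ht
      obtain ⟨ht0, ht1⟩ := ht
      have hd : 0 < a / b := div_pos ha hb
      have hd1 : a / b < 1 := (div_lt_one hb).2 hab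
      have hbt : 0 < 1 - (1 - a / b) * t := by
        nlinarith [mul_le_of_le_one_right (show (0:ℝ) ≤ 1 - a / b by linarith) ht1]
      have key : b * (1 - (1 - a / b) * t) = (1 - t) * b + (1 - (1 - t)) * a := by
        linear_combination t * hzb
      simp only
      rw [show (1:ℝ) - 1 = 0 by norm_num, Real.rpow_zero, one_mul,
        show α + 2 - 1 = α + 1 by ring, pow_split (1 - t) (by linarith),
        ← key, Real.mul_rpow hb.le hbt.le, Real.rpow_neg hb.le]
      ring
    rw [intervalIntegral.integral_congr h2,
      intervalIntegral.integral_comp_sub_left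
        (fun s => s * (s ^ α * (s * b + (1 - s) * a) ^ (-(2 * q)))) 1]
    norm_num
  -- Term B
  have hB : betaFn 2 (α + 1) / b ^ (2 * q) * hyp2F1 (2 * q) 2 (α + 3) (1 - a / b)
      = ∫ s in (0:ℝ)..1, (1 - s) * (s ^ α * (s * b + (1 - s) * a) ^ (-(2 * q))) := by
    unfold hyp2F1
    rw [show α + 3 - 2 = α + 1 by ring]
    have h1 : ∀ J : ℝ, betaFn 2 (α + 1) / b ^ (2 * q) * (1 / betaFn 2 (α + 1) * J)
        = (b ^ (2 * q))⁻¹ * J := by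
      intro J; field_simp
    rw [h1, ← intervalIntegral.integral_const_mul]
    have h2 : Set.EqOn
        (fun t => (b ^ (2 * q))⁻¹ *
          (t ^ ((2:ℝ) - 1) * (1 - t) ^ (α + 1 - 1) * (1 - (1 - a / b) * t) ^ (-(2 * q))))
        (fun t => (fun s => (1 - s) * (s ^ α * (s * b + (1 - s) * a) ^ (-(2 * q)))) (1 - t))
        (Set.uIcc (0:ℝ) 1) := by
      intro t ht
      rw [Set.uIcc_of_le zero_le_one] at ht
      obtain ⟨ht0, ht1⟩ := ht
      have hd : 0 < a / b := div_pos ha hb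
      have hd1 : a / b < 1 := (div_lt_one hb).2 hab
      have hbt : 0 < 1 - (1 - a / b) * t := by
        nlinarith [mul_le_of_le_one_right (show (0:ℝ) ≤ 1 - a / b by linarith) ht1]
      have key : b * (1 - (1 - a / b) * t) = (1 - t) * b + (1 - (1 - t)) * a := by
        linear_combination t * hzb
      simp only
      rw [show (2:ℝ) - 1 = 1 by norm_num, Real.rpow_one,
        show α + 1 - 1 = α by ring,
        ← key, Real.mul_rpow hb.le hbt.le, Real.rpow_neg hb.le]
      ring
    rw [intervalIntegral.integral_congr h2,
      intervalIntegral.integral_comp_sub_left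
        (fun s => (1 - s) * (s ^ α * (s * b + (1 - s) * a) ^ (-(2 * q)))) 1]
    norm_num
  -- Term C
  have hC : 2 ^ (2 * q - α) * betaFn 2 (α + 1) / (a + b) ^ (2 * q) *
        hyp2F1 (2 * q) 2 (α + 3) (1 - 2 * a / (a + b))
      = ∫ s in (0:ℝ)..(1/2), (2 * (1 - 2 * s)) *
          (s ^ α * (s * b + (1 - s) * a) ^ (-(2 * q))) := by
    have hs : (0:ℝ) < a + b := by linarith
    have hzab : 2 * a / (a + b) * (a + b) = 2 * a := div_mul_cancel₀ (2*a) hs.ne'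
    unfold hyp2F1
    rw [show α + 3 - 2 = α + 1 by ring]
    have h1 : ∀ J : ℝ, 2 ^ (2 * q - α) * betaFn 2 (α + 1) / (a + b) ^ (2 * q) *
        (1 / betaFn 2 (α + 1) * J)
        = 2 ^ (2 * q - α) * (((a + b) ^ (2 * q))⁻¹ * J) := by
      intro J; field_simp
    rw [h1, ← intervalIntegral.integral_const_mul]
    have h2 : (∫ t in (0:ℝ)..1, ((a + b) ^ (2 * q))⁻¹ *
          (t ^ ((2:ℝ) - 1) * (1 - t) ^ (α + 1 - 1) * (1 - (1 - 2 * a / (a + b)) * t) ^ (-(2 * q))))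
        = ∫ t in (0:ℝ)..1, t * (1 - t) ^ α * (a + b - (b - a) * t) ^ (-(2 * q)) := by
      apply intervalIntegral.integral_congr
      intro t ht
      rw [Set.uIcc_of_le zero_le_one] at ht
      obtain ⟨ht0, ht1⟩ := ht
      have hd : 0 < 2 * a / (a + b) := by positivity
      have hd1 : 2 * a / (a + b) ≤ 1 := by rw [div_le_one hs]; linarith
      have hbt : 0 < 1 - (1 - 2 * a / (a + b)) * t := by
        nlinarith [mul_le_of_le_one_right (show (0:ℝ) ≤ 1 - 2 * a / (a + b) by linarith) ht1]
      have key : (a + b) * (1 - (1 - 2 * a / (a + b)) * t) = a + b - (b - a) * t := by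
        linear_combination t * hzab
      simp only
      rw [show (2:ℝ) - 1 = 1 by norm_num, Real.rpow_one,
        show α + 1 - 1 = α by ring,
        ← key, Real.mul_rpow hs.le hbt.le, Real.rpow_neg hs.le]
      ring
    rw [h2]
    -- substitution t = 1 - 2u
    have e1 := intervalIntegral.integral_comp_mul_left
      (fun y => (1 - y) * (1 - (1 - y)) ^ α * (a + b - (b - a) * (1 - y)) ^ (-(2 * q)))
      (a := 0) (b := 1/2) (c := 2) two_ne_zero
    have e2 := intervalIntegral.integral_comp_sub_left
      (fun t => t * (1 - t) ^ α * (a + b - (b - a) * t) ^ (-(2 * q))) 1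
      (a := 0) (b := 1)
    norm_num at e1 e2
    have h3 : (∫ t in (0:ℝ)..1, t * (1 - t) ^ α * (a + b - (b - a) * t) ^ (-(2 * q)))
        = 2 * ∫ u in (0:ℝ)..(1/2),
            (1 - 2 * u) * (2 * u) ^ α * (a + b - (b - a) * (1 - 2 * u)) ^ (-(2 * q)) := by
      rw [← e2, e1]; ring
    rw [h3, ← intervalIntegral.integral_const_mul, ← intervalIntegral.integral_const_mul]
    apply intervalIntegral.integral_congr
    intro u hu
    rw [Set.uIcc_of_le (by norm_num : (0:ℝ) ≤ 1/2)] at hu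
    obtain ⟨hu0, hu1⟩ := hu
    have e5 : a + b - (b - a) * (1 - 2 * u) = 2 * (u * b + (1 - u) * a) := by ring
    have hDu : 0 ≤ u * b + (1 - u) * a := by nlinarith
    simp only
    rw [e5, Real.mul_rpow (by norm_num : (0:ℝ) ≤ 2) hu0,
      Real.mul_rpow (by norm_num : (0:ℝ) ≤ 2) hDu]
    have e6 : (2:ℝ) ^ (2 * q - α) * ((2:ℝ) ^ α * (2:ℝ) ^ (-(2 * q))) = 1 := by
      rw [← Real.rpow_add (by norm_num), ← Real.rpow_add (by norm_num),
        show 2 * q - α + (α + -(2 * q)) = 0 by ring, Real.rpow_zero]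
    linear_combination 2 * (1 - 2 * u) * (u ^ α * (u * b + (1 - u) * a) ^ (-(2 * q))) * e6
  -- Left-hand side
  have hL0 : (∫ t in (0:ℝ)..1, |1 - 2 * t| * t ^ α / (t * b + (1 - t) * a) ^ (2 * q))
      = ∫ t in (0:ℝ)..1, |1 - 2 * t| * (t ^ α * (t * b + (1 - t) * a) ^ (-(2 * q))) := by
    apply intervalIntegral.integral_congr
    intro t ht
    rw [Set.uIcc_of_le zero_le_one] at ht
    simp only
    rw [Real.rpow_neg (hD t ht).le, div_eq_mul_inv]
    ring
  have hiabs : IntervalIntegrable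
      (fun t => |1 - 2 * t| * (t ^ α * (t * b + (1 - t) * a) ^ (-(2 * q)))) volume 0 (1/2) ∧
      IntervalIntegrable
      (fun t => |1 - 2 * t| * (t ^ α * (t * b + (1 - t) * a) ^ (-(2 * q)))) volume (1/2) 1 := by
    constructor
    · exact ii_aux ha hab.le hα0 le_rfl (by norm_num) (by norm_num) _ (by fun_prop)
    · exact ii_aux ha hab.le hα0 (by norm_num) le_rfl (by norm_num) _ (by fun_prop)
  have hLsplit : (∫ t in (0:ℝ)..1, |1 - 2 * t| * (t ^ α * (t * b + (1 - t) * a) ^ (-(2 * q))))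
      = (∫ t in (0:ℝ)..(1/2), (1 - 2 * t) * (t ^ α * (t * b + (1 - t) * a) ^ (-(2 * q))))
        + ∫ t in (1/2:ℝ)..1, (2 * t - 1) * (t ^ α * (t * b + (1 - t) * a) ^ (-(2 * q))) := by
    rw [← intervalIntegral.integral_add_adjacent_intervals hiabs.1 hiabs.2]
    congr 1
    · apply intervalIntegral.integral_congr
      intro t ht
      rw [Set.uIcc_of_le (by norm_num : (0:ℝ) ≤ 1/2)] at ht
      simp only
      rw [abs_of_nonneg (by linarith [ht.2] : (0:ℝ) ≤ 1 - 2 * t)]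
    · apply intervalIntegral.integral_congr
      intro t ht
      rw [Set.uIcc_of_le (by norm_num : (1/2:ℝ) ≤ 1)] at ht
      simp only
      rw [abs_of_nonpos (by linarith [ht.1] : (1:ℝ) - 2 * t ≤ 0)]
      ring
  -- combine
  rw [hL0, hLsplit, hA, hB, hC]
  have hi1 : IntervalIntegrable (fun s => s * (s ^ α * (s * b + (1 - s) * a) ^ (-(2 * q))))
      volume 0 1 := ii_aux ha hab.le hα0 le_rfl le_rfl zero_le_one _ (by fun_prop)
  have hi2 : IntervalIntegrable (fun s => (1 - s) * (s ^ α * (s * b + (1 - s) * a) ^ (-(2 * q))))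
      volume 0 1 := ii_aux ha hab.le hα0 le_rfl le_rfl zero_le_one _ (by fun_prop)
  have hi3 : IntervalIntegrable (fun s => (2 * s - 1) * (s ^ α * (s * b + (1 - s) * a) ^ (-(2 * q))))
      volume 0 (1/2) := ii_aux ha hab.le hα0 le_rfl (by norm_num) (by norm_num) _ (by fun_prop)
  have hi4 : IntervalIntegrable (fun s => (2 * s - 1) * (s ^ α * (s * b + (1 - s) * a) ^ (-(2 * q))))
      volume (1/2) 1 := ii_aux ha hab.le hα0 (by norm_num) le_rfl (by norm_num) _ (by fun_prop)
  have hi5 : IntervalIntegrable (fun s => (2 * (1 - 2 * s)) * (s ^ α * (s * b + (1 - s) * a) ^ (-(2 * q))))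
      volume 0 (1/2) := ii_aux ha hab.le hα0 le_rfl (by norm_num) (by norm_num) _ (by fun_prop)
  have hAB : (∫ s in (0:ℝ)..1, s * (s ^ α * (s * b + (1 - s) * a) ^ (-(2 * q))))
      - (∫ s in (0:ℝ)..1, (1 - s) * (s ^ α * (s * b + (1 - s) * a) ^ (-(2 * q))))
      = ∫ s in (0:ℝ)..1, (2 * s - 1) * (s ^ α * (s * b + (1 - s) * a) ^ (-(2 * q))) := by
    rw [← intervalIntegral.integral_sub hi1 hi2]
    apply intervalIntegral.integral_congr
    intro s _
    simp only
    ring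
  rw [hAB]
  have hsplit2 : (∫ s in (0:ℝ)..1, (2 * s - 1) * (s ^ α * (s * b + (1 - s) * a) ^ (-(2 * q))))
      = (∫ s in (0:ℝ)..(1/2), (2 * s - 1) * (s ^ α * (s * b + (1 - s) * a) ^ (-(2 * q))))
        + ∫ s in (1/2:ℝ)..1, (2 * s - 1) * (s ^ α * (s * b + (1 - s) * a) ^ (-(2 * q))) := by
    rw [intervalIntegral.integral_add_adjacent_intervals hi3 hi4]
  rw [hsplit2]
  have hfirst : (∫ t in (0:ℝ)..(1/2), (1 - 2 * t) * (t ^ α * (t * b + (1 - t) * a) ^ (-(2 * q))))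
      = (∫ s in (0:ℝ)..(1/2), (2 * s - 1) * (s ^ α * (s * b + (1 - s) * a) ^ (-(2 * q))))
        + ∫ s in (0:ℝ)..(1/2), (2 * (1 - 2 * s)) * (s ^ α * (s * b + (1 - s) * a) ^ (-(2 * q))) := by
    rw [← intervalIntegral.integral_add hi3 hi5]
    apply intervalIntegral.integral_congr
    intro s _
    simp only
    ring
  rw [hfirst]
  ring
end

section
/- Let 0 < a < b. Define λ₁ = 1/(ab) − (2/(b−a)²)·ln((a+b)²/(4ab)). Then ∫_0^1 |1−2t|/(tb+(1−t)a)² dt = λ₁. -/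
open intervalIntegral MeasureTheory

theorem lambda_one_closed_form (a b : ℝ) (ha : 0 < a) (hab : a < b) :
    ∫ t in (0:ℝ)..1, |1 - 2 * t| / (t * b + (1 - t) * a) ^ 2 =
      1 / (a * b) - (2 / (b - a) ^ 2) * Real.log ((a + b) ^ 2 / (4 * a * b)) := by
  have hb : 0 < b := ha.trans hab
  have hc : 0 < b - a := sub_pos.mpr hab
  have hLpos : ∀ t : ℝ, 0 ≤ t → 0 < t * b + (1 - t) * a := by
    intro t ht
    have h1 : t * b + (1 - t) * a = a + t * (b - a) := by ring
    rw [h1]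
    nlinarith [mul_nonneg ht hc.le]
  have hLderiv : ∀ t : ℝ, HasDerivAt (fun s : ℝ => s * b + (1 - s) * a) (b - a) t := by
    intro t
    have h1 : HasDerivAt (fun s : ℝ => s * b + (1 - s) * a) (1 * b + (0 - 1) * a) t :=
      ((hasDerivAt_id t).mul_const b).add
        (((hasDerivAt_const t (1:ℝ)).sub (hasDerivAt_id t)).mul_const a)
    convert h1 using 1; ring
  set F : ℝ → ℝ := fun s =>
    -((a + b) / (b - a) ^ 2) * (s * b + (1 - s) * a)⁻¹
      - 2 / (b - a) ^ 2 * Real.log (s * b + (1 - s) * a) with hF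
  have key : ∀ t : ℝ, 0 ≤ t →
      HasDerivAt F ((1 - 2 * t) / (t * b + (1 - t) * a) ^ 2) t := by
    intro t ht
    have hL := hLpos t ht
    have h1 := ((hLderiv t).inv hL.ne').const_mul (-((a + b) / (b - a) ^ 2))
    have h2 := ((hLderiv t).log hL.ne').const_mul (2 / (b - a) ^ 2)
    have h := h1.sub h2
    refine h.congr_deriv ?_
    have h0 : t * b + (1 - t) * a ≠ 0 := hL.ne'
    have hc0 : b - a ≠ 0 := hc.ne'
    field_simp
    ring
  have hcont : ContinuousOn (fun t : ℝ => |1 - 2 * t| / (t * b + (1 - t) * a) ^ 2)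
      (Set.Icc 0 1) := by
    apply ContinuousOn.div
    · fun_prop
    · fun_prop
    · intro t ht
      exact pow_ne_zero _ (hLpos t ht.1).ne'
  have hint : ∀ u v : ℝ, u ∈ Set.Icc (0:ℝ) 1 → v ∈ Set.Icc (0:ℝ) 1 →
      IntervalIntegrable (fun t : ℝ => |1 - 2 * t| / (t * b + (1 - t) * a) ^ 2)
        volume u v := by
    intro u v hu hv
    exact (hcont.mono (Set.uIcc_subset_Icc hu hv)).intervalIntegrable
  have hsplit :
      ∫ t in (0:ℝ)..1, |1 - 2 * t| / (t * b + (1 - t) * a) ^ 2 =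
        (∫ t in (0:ℝ)..(1/2), |1 - 2 * t| / (t * b + (1 - t) * a) ^ 2) +
        ∫ t in (1/2:ℝ)..1, |1 - 2 * t| / (t * b + (1 - t) * a) ^ 2 := by
    rw [intervalIntegral.integral_add_adjacent_intervals
      (hint 0 (1/2) (by norm_num) (by norm_num)) (hint (1/2) 1 (by norm_num) (by norm_num))]
  have hI1 : (∫ t in (0:ℝ)..(1/2), |1 - 2 * t| / (t * b + (1 - t) * a) ^ 2)
      = F (1/2) - F 0 := by
    have heq : ∫ t in (0:ℝ)..(1/2), |1 - 2 * t| / (t * b + (1 - t) * a) ^ 2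
        = ∫ t in (0:ℝ)..(1/2), (1 - 2 * t) / (t * b + (1 - t) * a) ^ 2 := by
      apply intervalIntegral.integral_congr
      intro t htm
      rw [Set.uIcc_of_le (by norm_num)] at htm
      have : 0 ≤ 1 - 2 * t := by linarith [htm.2]
      simp [abs_of_nonneg this]
    rw [heq]
    apply intervalIntegral.integral_eq_sub_of_hasDerivAt
    · intro t htm
      rw [Set.uIcc_of_le (by norm_num)] at htm
      exact key t htm.1
    · have : ContinuousOn (fun t : ℝ => (1 - 2 * t) / (t * b + (1 - t) * a) ^ 2)
          (Set.uIcc 0 (1/2)) := by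
        apply ContinuousOn.div
        · fun_prop
        · fun_prop
        · intro t htm
          rw [Set.uIcc_of_le (by norm_num)] at htm
          exact pow_ne_zero _ (hLpos t htm.1).ne'
      exact this.intervalIntegrable
  have hI2 : (∫ t in (1/2:ℝ)..1, |1 - 2 * t| / (t * b + (1 - t) * a) ^ 2)
      = (-F) 1 - (-F) (1/2) := by
    have heq : ∫ t in (1/2:ℝ)..1, |1 - 2 * t| / (t * b + (1 - t) * a) ^ 2
        = ∫ t in (1/2:ℝ)..1, (2 * t - 1) / (t * b + (1 - t) * a) ^ 2 := by
      apply intervalIntegral.integral_congr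
      intro t htm
      rw [Set.uIcc_of_le (by norm_num)] at htm
      have h0 : 1 - 2 * t ≤ 0 := by linarith [htm.1]
      simp [abs_of_nonpos h0]
    rw [heq]
    apply intervalIntegral.integral_eq_sub_of_hasDerivAt
    · intro t htm
      rw [Set.uIcc_of_le (by norm_num)] at htm
      have h := (key t (by linarith [htm.1])).neg
      convert h using 1
      ring
    · have : ContinuousOn (fun t : ℝ => (2 * t - 1) / (t * b + (1 - t) * a) ^ 2)
          (Set.uIcc (1/2) 1) := by
        apply ContinuousOn.div
        · fun_prop
        · fun_prop
        · intro t htm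
          rw [Set.uIcc_of_le (by norm_num)] at htm
          exact pow_ne_zero _ (hLpos t (by linarith [htm.1])).ne'
      exact this.intervalIntegrable
  rw [hsplit, hI1, hI2]
  simp only [hF, Pi.neg_apply]
  have e0 : (0:ℝ) * b + (1 - 0) * a = a := by ring
  have e1 : (1:ℝ) * b + (1 - 1) * a = b := by ring
  have eh : (1/2:ℝ) * b + (1 - 1/2) * a = (a + b) / 2 := by ring
  rw [e0, e1, eh]
  have hab2 : (0:ℝ) < (a + b) / 2 := by linarith
  have hlog : Real.log ((a + b) ^ 2 / (4 * a * b))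
      = 2 * Real.log ((a + b) / 2) - Real.log a - Real.log b := by
    have h1 : (a + b) ^ 2 / (4 * a * b) = ((a + b) / 2) ^ 2 / (a * b) := by ring
    rw [h1, Real.log_div (by positivity) (by positivity),
      Real.log_pow, Real.log_mul ha.ne' hb.ne']
    push_cast; ring
  rw [hlog]
  have h2ab : ((a + b) / 2 : ℝ)⁻¹ = 2 / (a + b) := by
    rw [inv_div]
  rw [h2ab]
  field_simp
  ring
end
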